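/- Let x be a standard normal random variable and b a real number. Then the variance of sin(b·x) is (1 - e^{-2b²})/2. -/

import Mathlib

open MeasureTheory ProbabilityTheory Real Complex

lemma integral_gaussianReal_eq (g : ℝ → ℝ) :
    ∫ x, g x ∂(gaussianReal 0 1) = ∫ x, gaussianPDFReal 0 1 x * g x := by
  rw [gaussianReal_of_var_ne_zero 0 one_ne_zero]
  have h : gaussianPDF 0 1 = fun x => ((Real.toNNReal (gaussianPDFReal 0 1 x) : NNReal) : ENNReal) := rfl
  rw [h, integral_withDensity_eq_integral_smul ((measurable_gaussianPDFReal 0 1).real_toNNReal)]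
  congr 1; ext x
  rw [NNReal.smul_def, smul_eq_mul, Real.coe_toNNReal _ (gaussianPDFReal_nonneg 0 1 x)]

lemma pdf01 (x : ℝ) : gaussianPDFReal 0 1 x = (Real.sqrt (2*π))⁻¹ * Real.exp (-x^2/2) := by
  simp [gaussianPDFReal, neg_div]

lemma key_complex (t : ℝ) :
    ∫ x : ℝ, Complex.exp (-(1/2 : ℂ) * x ^ 2 + (Complex.I * t) * x + 0)
      = (Real.sqrt (2*π) : ℂ) * Complex.exp ((-t^2/2 : ℝ) : ℂ) := by
  rw [integral_cexp_quadratic (by norm_num : (-(1/2 : ℂ)).re < 0) (Complex.I * t) 0]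
  congr 1
  · rw [show (π : ℂ) / -(-(1/2:ℂ)) = ((2*π : ℝ) : ℂ) by push_cast; ring,
      Real.sqrt_eq_rpow, Complex.ofReal_cpow (by positivity : (0:ℝ) ≤ 2*π)]
    norm_num
  · congr 1
    have h2 : Complex.I ^ 2 = -1 := Complex.I_sq
    push_cast
    rw [mul_pow, h2]
    ring

lemma exp_decomp (t x : ℝ) :
    Complex.exp (-(1/2:ℂ)*x^2 + (Complex.I*t)*x + 0)
      = (Real.exp (-x^2/2) : ℂ) * (Real.cos (t*x) + Real.sin (t*x)*Complex.I) := by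
  rw [show -(1/2:ℂ)*x^2 + (Complex.I*t)*x + 0
      = ((-x^2/2 : ℝ) : ℂ) + ((t*x : ℝ):ℂ)*Complex.I by push_cast; ring,
    Complex.exp_add, Complex.exp_mul_I, Complex.ofReal_exp, Complex.ofReal_cos,
    Complex.ofReal_sin]

lemma integrable_cexp_std (t : ℝ) :
    Integrable (fun x : ℝ => Complex.exp (-(1/2:ℂ)*x^2 + (Complex.I*t)*x + 0)) :=
  integrable_cexp_quadratic' (by norm_num : (-(1/2:ℂ)).re < 0) (Complex.I*t) 0

lemma re_part (t x : ℝ) :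
    (Complex.exp (-(1/2:ℂ)*x^2 + (Complex.I*t)*x + 0)).re = Real.exp (-x^2/2) * Real.cos (t*x) := by
  rw [exp_decomp]
  simp only [Complex.mul_re, Complex.add_re, Complex.ofReal_re, Complex.ofReal_im,
    Complex.add_im, Complex.mul_im, Complex.I_re, Complex.I_im]
  ring

lemma im_part (t x : ℝ) :
    (Complex.exp (-(1/2:ℂ)*x^2 + (Complex.I*t)*x + 0)).im = Real.exp (-x^2/2) * Real.sin (t*x) := by
  rw [exp_decomp]
  simp only [Complex.mul_re, Complex.add_re, Complex.ofReal_re, Complex.ofReal_im,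
    Complex.add_im, Complex.mul_im, Complex.I_re, Complex.I_im]
  ring

lemma integrable_exp_cos (t : ℝ) :
    Integrable (fun x : ℝ => Real.exp (-x^2/2) * Real.cos (t*x)) := by
  have h := (integrable_cexp_std t).re
  refine h.congr (ae_of_all _ fun x => ?_)
  simp only [RCLike.re_to_complex, re_part]

lemma J_cos (t : ℝ) :
    ∫ x : ℝ, Real.exp (-x^2/2) * Real.cos (t*x) = Real.sqrt (2*π) * Real.exp (-t^2/2) := by
  have h2 := integral_re (integrable_cexp_std t)
  simp only [RCLike.re_to_complex] at h2
  rw [key_complex t] at h2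
  simp only [re_part] at h2
  rw [h2, ← Complex.ofReal_exp, ← Complex.ofReal_mul, Complex.ofReal_re]

lemma J_sin (t : ℝ) :
    ∫ x : ℝ, Real.exp (-x^2/2) * Real.sin (t*x) = 0 := by
  have h2 := integral_im (integrable_cexp_std t)
  simp only [RCLike.im_to_complex] at h2
  rw [key_complex t] at h2
  simp only [im_part] at h2
  rw [h2, ← Complex.ofReal_exp, ← Complex.ofReal_mul, Complex.ofReal_im]

lemma sqrt_two_pi_pos : 0 < Real.sqrt (2*π) := Real.sqrt_pos.mpr (by positivity)

lemma E_cos (t : ℝ) :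
    ∫ x, Real.cos (t*x) ∂(gaussianReal 0 1) = Real.exp (-t^2/2) := by
  rw [integral_gaussianReal_eq]
  simp only [pdf01, mul_assoc]
  rw [integral_const_mul, J_cos]
  rw [← mul_assoc, inv_mul_cancel₀ sqrt_two_pi_pos.ne', one_mul]

lemma E_sin (t : ℝ) :
    ∫ x, Real.sin (t*x) ∂(gaussianReal 0 1) = 0 := by
  rw [integral_gaussianReal_eq]
  simp only [pdf01, mul_assoc]
  rw [integral_const_mul, J_sin, mul_zero]

lemma integrable_cos_gaussian (t : ℝ) :
    Integrable (fun x => Real.cos (t*x)) (gaussianReal 0 1) := by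
  have : MemLp (fun x => Real.cos (t*x)) ⊤ (gaussianReal 0 1) :=
    memLp_top_of_bound ((Real.continuous_cos.comp (continuous_const.mul continuous_id)).aestronglyMeasurable)
      1 (ae_of_all _ fun x => by simpa using Real.abs_cos_le_one (t*x))
  exact (this.mono_exponent le_top).integrable le_rfl

lemma memLp_sin_gaussian (t : ℝ) :
    MemLp (fun x => Real.sin (t*x)) 2 (gaussianReal 0 1) := by
  have : MemLp (fun x => Real.sin (t*x)) ⊤ (gaussianReal 0 1) :=
    memLp_top_of_bound ((Real.continuous_sin.comp (continuous_const.mul continuous_id)).aestronglyMeasurable)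
      1 (ae_of_all _ fun x => by simpa using Real.abs_sin_le_one (t*x))
  exact this.mono_exponent le_top

/-- Variance of `sin (b * x)` for `x` standard normal is `(1 - e^{-2b²})/2`. -/
theorem variance_sin_gaussian (b : ℝ) :
    variance (fun x => Real.sin (b * x)) (gaussianReal 0 1)
      = (1 - Real.exp (-2 * b ^ 2)) / 2 := by
  rw [variance_eq_sub (memLp_sin_gaussian b)]
  have h2 : (fun x => Real.sin (b*x)) ^ 2 = fun x => 1/2 - Real.cos (2*b*x)/2 := by
    funext x
    simp only [Pi.pow_apply]
    rw [Real.sin_sq_eq_half_sub]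
    ring_nf
  rw [h2, E_sin b]
  have hint1 : Integrable (fun _ : ℝ => (1:ℝ)/2) (gaussianReal 0 1) := integrable_const _
  have hint2 : Integrable (fun x => Real.cos (2*b*x)/2) (gaussianReal 0 1) :=
    (integrable_cos_gaussian (2*b)).div_const 2
  rw [integral_sub hint1 hint2, integral_const]
  rw [show (fun a => Real.cos (2*b*a)/2) = fun a => Real.cos (2*b*a)/2 from rfl, integral_div,
    E_cos (2*b)]
  simp only [measure_univ, probReal_univ, ENNReal.toReal_one, smul_eq_mul, one_mul]
  rw [show -(2*b)^2/2 = -2*b^2 by ring]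
  ring
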